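/- For p > 2 and real s ∈ [0,1], if x(s) := s·a + (1-s)·b for vectors a, b in R^K, then the derivative in s of |x(s)|^{p-2} x(s) exists for every s (including where x(s) = 0) and satisfies |d/ds(|x(s)|^{p-2} x(s))| ≤ 2^{p-2}(p-1)(|a|^{p-2} + |b|^{p-2})|a - b|. -/

import Mathlib

open Real Filter
open scoped RealInnerProductSpace Topology

lemma aux_rpow_sum_bound (q u v : ℝ) (hq : 0 ≤ q) (hu : 0 ≤ u) (hv : 0 ≤ v) :
    (u + v) ^ q ≤ 2 ^ q * (u ^ q + v ^ q) := by
  have h1 : u + v ≤ 2 * max u v := by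
    rcases le_total u v with h | h <;> simp [max_eq_right, max_eq_left, h] <;> linarith
  have h2 : (u + v) ^ q ≤ (2 * max u v) ^ q :=
    Real.rpow_le_rpow (by positivity) h1 hq
  have h3 : (2 * max u v) ^ q = 2 ^ q * (max u v) ^ q :=
    Real.mul_rpow (by norm_num) (le_max_of_le_left hu)
  have h4 : (max u v) ^ q ≤ u ^ q + v ^ q := by
    rcases max_cases u v with ⟨h, _⟩ | ⟨h, _⟩ <;> rw [h]
    · exact le_add_of_nonneg_right (Real.rpow_nonneg hv q)
    · exact le_add_of_nonneg_left (Real.rpow_nonneg hu q)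
  calc (u + v) ^ q ≤ 2 ^ q * (max u v) ^ q := by rw [← h3]; exact h2
    _ ≤ 2 ^ q * (u ^ q + v ^ q) := by
        exact mul_le_mul_of_nonneg_left h4 (Real.rpow_nonneg (by norm_num) q)

set_option maxHeartbeats 1000000 in
/-- For `p > 2` and `x(s) = s a + (1-s) b`, the derivative of
`s ↦ |x(s)|^{p-2} x(s)` exists at every `s ∈ [0,1]` (including where
`x(s) = 0`) and is bounded by `2^{p-2}(p-1)(|a|^{p-2}+|b|^{p-2})|a-b|`. -/
theorem pLaplace_segment_deriv (K : ℕ) (p : ℝ) (hp : 2 < p)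
    (a b : EuclideanSpace ℝ (Fin K)) (s : ℝ) (hs : s ∈ Set.Icc (0 : ℝ) 1) :
    ∃ d : EuclideanSpace ℝ (Fin K),
      HasDerivAt (fun s : ℝ =>
        (‖s • a + (1 - s) • b‖ ^ (p - 2)) • (s • a + (1 - s) • b)) d s ∧
      ‖d‖ ≤ 2 ^ (p - 2) * (p - 1) * (‖a‖ ^ (p - 2) + ‖b‖ ^ (p - 2)) * ‖a - b‖ := by
  set x : ℝ → EuclideanSpace ℝ (Fin K) := fun t => t • a + (1 - t) • b with hxdef
  have hx : ∀ t, HasDerivAt x (a - b) t := by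
    intro t
    have h1 : HasDerivAt (fun t : ℝ => t • a) ((1 : ℝ) • a) t :=
      (hasDerivAt_id t).smul_const a
    have h2 : HasDerivAt (fun t : ℝ => (1 - t) • b) ((-1 : ℝ) • b) t := by
      have h0 : HasDerivAt (fun t : ℝ => 1 - t) (-1) t := by
        simpa using (hasDerivAt_id' t).const_sub (1 : ℝ)
      exact h0.smul_const b
    have := h1.add h2
    have e : (a - b) = (1:ℝ) • a + (-1:ℝ) • b := by simp [sub_eq_add_neg]
    rw [e]; exact this
  have hRHS : 0 ≤ 2 ^ (p - 2) * (p - 1) * (‖a‖ ^ (p - 2) + ‖b‖ ^ (p - 2)) * ‖a - b‖ := by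
    have h1 : (0:ℝ) ≤ 2 ^ (p - 2) := Real.rpow_nonneg (by norm_num) _
    have h2 : (0:ℝ) ≤ p - 1 := by linarith
    have h3 : (0:ℝ) ≤ ‖a‖ ^ (p - 2) + ‖b‖ ^ (p - 2) := by
      positivity
    positivity
  by_cases hxs : x s = 0
  · refine ⟨0, ?_, by simpa using hRHS⟩
    have hxt : ∀ t, x t = (t - s) • (a - b) := by
      intro t
      have h : x t - x s = (t - s) • (a - b) := by
        simp only [hxdef]
        module
      rw [hxs, sub_zero] at h
      exact h
    set g : ℝ → ℝ := fun t => (|t - s| * ‖a - b‖) ^ (p - 2) * (t - s) with hgdef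
    have hfg : (fun t : ℝ => (‖t • a + (1 - t) • b‖ ^ (p - 2)) • (t • a + (1 - t) • b))
        = fun t => g t • (a - b) := by
      funext t
      have : t • a + (1 - t) • b = x t := rfl
      rw [this, hxt t, norm_smul, Real.norm_eq_abs, smul_smul, hgdef]
    have hgs : g s = 0 := by simp [hgdef]
    have hg : HasDerivAt g 0 s := by
      rw [hasDerivAt_iff_tendsto_slope]
      have hlim : Tendsto (fun t : ℝ => (|t - s| * ‖a - b‖) ^ (p - 2)) (𝓝[≠] s) (𝓝 0) := by
        have hc : Tendsto (fun t : ℝ => |t - s| * ‖a - b‖) (𝓝[≠] s) (𝓝 0) := by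
          have : Tendsto (fun t : ℝ => |t - s| * ‖a - b‖) (𝓝 s) (𝓝 (|s - s| * ‖a - b‖)) := by
            exact Continuous.tendsto (by continuity) s
          simpa using this.mono_left nhdsWithin_le_nhds
        have hcont : ContinuousAt (fun y : ℝ => y ^ (p - 2)) 0 :=
          Real.continuousAt_rpow_const 0 (p - 2) (Or.inr (by linarith))
        have := hcont.tendsto.comp hc
        rwa [Real.zero_rpow (by linarith : p - 2 ≠ 0)] at this
      refine Tendsto.congr' ?_ hlim
      filter_upwards [self_mem_nhdsWithin] with t ht
      have hts : t - s ≠ 0 := sub_ne_zero.mpr ht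
      rw [slope_def_field, hgs, hgdef]
      field_simp
      ring
    have := hg.smul_const (a - b)
    rw [hfg]
    simpa using this
  · -- x s ≠ 0
    set q : ℝ := (p - 2) / 2 with hqdef
    have hinner : HasDerivAt (fun t => ⟪x t, x t⟫) (⟪x s, a - b⟫ + ⟪a - b, x s⟫) s :=
      (hx s).inner ℝ (hx s)
    have hgs_pos : (0:ℝ) < ⟪x s, x s⟫ := by
      rw [real_inner_self_eq_norm_sq]
      exact pow_pos (norm_pos_iff.mpr hxs) 2
    have hφ : HasDerivAt (fun t => ⟪x t, x t⟫ ^ q)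
        ((⟪x s, a - b⟫ + ⟪a - b, x s⟫) * q * ⟪x s, x s⟫ ^ (q - 1)) s :=
      hinner.rpow_const (Or.inl hgs_pos.ne')
    have hd := hφ.smul (hx s)
    have key : (fun t : ℝ => (‖t • a + (1 - t) • b‖ ^ (p - 2)) • (t • a + (1 - t) • b))
        = fun t => (⟪x t, x t⟫ ^ q) • x t := by
      funext t
      have h1 : t • a + (1 - t) • b = x t := rfl
      rw [h1]
      congr 1
      rw [real_inner_self_eq_norm_sq, ← Real.rpow_natCast ‖x t‖ 2,
        ← Real.rpow_mul (norm_nonneg _)]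
      rw [hqdef]
      congr 1
      push_cast
      ring
    refine ⟨_, by rw [key]; exact hd, ?_⟩
    -- norm bound
    set n : ℝ := ‖x s‖ with hndef
    have hn : 0 < n := norm_pos_iff.mpr hxs
    have hip : ⟪x s, x s⟫ = n ^ (2:ℕ) := real_inner_self_eq_norm_sq (x s)
    have hq1 : ⟪x s, x s⟫ ^ q = n ^ (p - 2) := by
      rw [hip, ← Real.rpow_natCast n 2, ← Real.rpow_mul (le_of_lt hn)]
      rw [hqdef]
      congr 1
      push_cast
      ring
    have hq2 : ⟪x s, x s⟫ ^ (q - 1) = n ^ (p - 4) := by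
      rw [hip, ← Real.rpow_natCast n 2, ← Real.rpow_mul (le_of_lt hn)]
      rw [hqdef]
      congr 1
      push_cast
      ring
    have hCS : |⟪x s, a - b⟫ + ⟪a - b, x s⟫| ≤ 2 * (n * ‖a - b‖) := by
      have h1 := abs_real_inner_le_norm (x s) (a - b)
      have h2 := abs_real_inner_le_norm (a - b) (x s)
      rw [← hndef] at h1 h2
      calc |⟪x s, a - b⟫ + ⟪a - b, x s⟫| ≤ |⟪x s, a - b⟫| + |⟪a - b, x s⟫| := abs_add_le _ _
        _ ≤ 2 * (n * ‖a - b‖) := by linarith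
    have hbound1 : ‖(⟪x s, x s⟫ ^ q) • (a - b)
        + ((⟪x s, a - b⟫ + ⟪a - b, x s⟫) * q * ⟪x s, x s⟫ ^ (q - 1)) • x s‖
        ≤ (p - 1) * n ^ (p - 2) * ‖a - b‖ := by
      have t1 : ‖(⟪x s, x s⟫ ^ q) • (a - b)‖ = n ^ (p - 2) * ‖a - b‖ := by
        rw [norm_smul, Real.norm_eq_abs, hq1,
          abs_of_nonneg (Real.rpow_nonneg (le_of_lt hn) _)]
      have t2 : ‖((⟪x s, a - b⟫ + ⟪a - b, x s⟫) * q * ⟪x s, x s⟫ ^ (q - 1)) • x s‖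
          ≤ (p - 2) * (n ^ (p - 2) * ‖a - b‖) := by
        rw [norm_smul, Real.norm_eq_abs, ← hndef]
        have hq_pos : 0 ≤ q := by rw [hqdef]; linarith
        have habs : |(⟪x s, a - b⟫ + ⟪a - b, x s⟫) * q * ⟪x s, x s⟫ ^ (q - 1)|
            ≤ (2 * (n * ‖a - b‖)) * q * n ^ (p - 4) := by
          rw [abs_mul, abs_mul, hq2, abs_of_nonneg hq_pos,
            abs_of_nonneg (Real.rpow_nonneg (le_of_lt hn) _)]
          have := Real.rpow_nonneg (le_of_lt hn) (p - 4)
          gcongr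
        have hrw : (2 * (n * ‖a - b‖)) * q * n ^ (p - 4) * n = (p - 2) * (n ^ (p - 2) * ‖a - b‖) := by
          have hmul : n ^ (p - 4) * n * n = n ^ (p - 2) := by
            rw [← Real.rpow_add_one hn.ne' (p - 4), ← Real.rpow_add_one hn.ne' (p - 4 + 1)]
            congr 1
            ring
          rw [hqdef, ← hmul]
          ring
        calc |(⟪x s, a - b⟫ + ⟪a - b, x s⟫) * q * ⟪x s, x s⟫ ^ (q - 1)| * n
            ≤ (2 * (n * ‖a - b‖)) * q * n ^ (p - 4) * n := by
              have h2 : 0 ≤ |(⟪x s, a - b⟫ + ⟪a - b, x s⟫) * q * ⟪x s, x s⟫ ^ (q - 1)| := abs_nonneg _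
              exact mul_le_mul_of_nonneg_right habs (le_of_lt hn)
          _ = (p - 2) * (n ^ (p - 2) * ‖a - b‖) := hrw
      calc ‖(⟪x s, x s⟫ ^ q) • (a - b)
          + ((⟪x s, a - b⟫ + ⟪a - b, x s⟫) * q * ⟪x s, x s⟫ ^ (q - 1)) • x s‖
          ≤ ‖(⟪x s, x s⟫ ^ q) • (a - b)‖
            + ‖((⟪x s, a - b⟫ + ⟪a - b, x s⟫) * q * ⟪x s, x s⟫ ^ (q - 1)) • x s‖ := norm_add_le _ _
        _ ≤ n ^ (p - 2) * ‖a - b‖ + (p - 2) * (n ^ (p - 2) * ‖a - b‖) := by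
            rw [t1]; exact add_le_add le_rfl t2
        _ = (p - 1) * n ^ (p - 2) * ‖a - b‖ := by ring
    -- now bound n ^ (p-2)
    have hn_le : n ≤ ‖a‖ + ‖b‖ := by
      obtain ⟨hs0, hs1⟩ := hs
      calc n = ‖s • a + (1 - s) • b‖ := rfl
        _ ≤ ‖s • a‖ + ‖(1 - s) • b‖ := norm_add_le _ _
        _ = s * ‖a‖ + (1 - s) * ‖b‖ := by
            rw [norm_smul, norm_smul, Real.norm_eq_abs, Real.norm_eq_abs,
              abs_of_nonneg hs0, abs_of_nonneg (by linarith)]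
        _ ≤ ‖a‖ + ‖b‖ := by nlinarith [norm_nonneg a, norm_nonneg b]
    have hnp : n ^ (p - 2) ≤ 2 ^ (p - 2) * (‖a‖ ^ (p - 2) + ‖b‖ ^ (p - 2)) := by
      calc n ^ (p - 2) ≤ (‖a‖ + ‖b‖) ^ (p - 2) :=
            Real.rpow_le_rpow (le_of_lt hn) hn_le (by linarith)
        _ ≤ 2 ^ (p - 2) * (‖a‖ ^ (p - 2) + ‖b‖ ^ (p - 2)) :=
            aux_rpow_sum_bound (p - 2) ‖a‖ ‖b‖ (by linarith) (norm_nonneg a) (norm_nonneg b)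
    calc ‖(⟪x s, x s⟫ ^ q) • (a - b)
        + ((⟪x s, a - b⟫ + ⟪a - b, x s⟫) * q * ⟪x s, x s⟫ ^ (q - 1)) • x s‖
        ≤ (p - 1) * n ^ (p - 2) * ‖a - b‖ := hbound1
      _ ≤ (p - 1) * (2 ^ (p - 2) * (‖a‖ ^ (p - 2) + ‖b‖ ^ (p - 2))) * ‖a - b‖ := by
          have hp1 : (0:ℝ) ≤ p - 1 := by linarith
          gcongr
      _ = 2 ^ (p - 2) * (p - 1) * (‖a‖ ^ (p - 2) + ‖b‖ ^ (p - 2)) * ‖a - b‖ := by ring
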